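/- Let n ≥ 1, m = m₁ + m₂ with m₁, m₂ ≥ 1, and 0 ≤ t < T. Let A ∈ L¹(t,T;ℝ^{n×n}), B = (B₁, B₂) ∈ L²(t,T;ℝ^{n×m}) with blocks B₁, B₂ of column sizes m₁, m₂, C ∈ L²(t,T;ℝ^{n×n}), D = (D₁, D₂) ∈ L^∞(t,T;ℝ^{n×m}), Q ∈ L¹(t,T;𝕊ⁿ), S ∈ L²(t,T;ℝ^{m×n}), R ∈ L^∞(t,T;𝕊ᵐ) with block decomposition R = [[R₁₁, R₁₂],[R₂₁, R₂₂]], and G ∈ 𝕊ⁿ. Call a continuous P : [t,T] → 𝕊ⁿ a regular solution of the Riccati equation if, with M(s) = B(s)ᵀP(s) + D(s)ᵀP(s)C(s) + S(s), R̂(s) = R(s) + D(s)ᵀP(s)D(s), and R̂(s)† the Moore–Penrose pseudoinverse of R̂(s), one has: P(s) = G + ∫ₛᵀ [PA + AᵀP + CᵀPC + Q − MᵀR̂†M] dr for all s ∈ [t,T]; R̂R̂†M = M a.e. on [t,T]; R̂†M ∈ L²(t,T;ℝ^{m×n}); and, a.e. on [t,T], R₁₁ + D₁ᵀPD₁ is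 positive semidefinite and R₂₂ + D₂ᵀPD₂ is negative semidefinite. Then the Riccati equation admits at most one regular solution: if P and P̄ are both regular solutions, then P(s) = P̄(s) for all s ∈ [t,T]. -/

import Mathlib

open Matrix MeasureTheory

attribute [local instance] Matrix.normedAddCommGroup Matrix.normedSpace

/-- `P` is a *regular solution* of the game Riccati equation on `[t,T]`: `P` is continuous
with symmetric values and there is a pointwise Moore–Penrose pseudoinverse `R̂†` of
`R̂ = R + DᵀPD` (four Penrose equations a.e.) such that `P` solves the Riccati integral
equation, the range condition `R̂R̂†M = M` holds a.e. (where `M = BᵀP + DᵀPC + S`),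
`R̂†M ∈ L²(t,T;ℝ^{m×n})`, and a.e. the block `R₁₁ + D₁ᵀPD₁` is positive semidefinite while
`R₂₂ + D₂ᵀPD₂` is negative semidefinite. The control index set is `Fin m₁ ⊕ Fin m₂`,
`Sum.inl`/`Sum.inr` giving the blocks of the two players. -/
def IsRegularGameRiccatiSolution {n m₁ m₂ : ℕ} (t T : ℝ)
    (A : ℝ → Matrix (Fin n) (Fin n) ℝ)
    (B : ℝ → Matrix (Fin n) (Fin m₁ ⊕ Fin m₂) ℝ)
    (C : ℝ → Matrix (Fin n) (Fin n) ℝ)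
    (D : ℝ → Matrix (Fin n) (Fin m₁ ⊕ Fin m₂) ℝ)
    (Q : ℝ → Matrix (Fin n) (Fin n) ℝ)
    (S : ℝ → Matrix (Fin m₁ ⊕ Fin m₂) (Fin n) ℝ)
    (R : ℝ → Matrix (Fin m₁ ⊕ Fin m₂) (Fin m₁ ⊕ Fin m₂) ℝ)
    (G : Matrix (Fin n) (Fin n) ℝ)
    (P : ℝ → Matrix (Fin n) (Fin n) ℝ) : Prop :=
  ContinuousOn P (Set.Icc t T) ∧
  (∀ s ∈ Set.Icc t T, (P s)ᵀ = P s) ∧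
  ∃ Rdag : ℝ → Matrix (Fin m₁ ⊕ Fin m₂) (Fin m₁ ⊕ Fin m₂) ℝ,
    -- four Penrose equations for R̂ = R + DᵀPD, a.e.
    (∀ᵐ s ∂volume.restrict (Set.Icc t T),
      (R s + (D s)ᵀ * P s * D s) * Rdag s * (R s + (D s)ᵀ * P s * D s)
          = R s + (D s)ᵀ * P s * D s ∧
        Rdag s * (R s + (D s)ᵀ * P s * D s) * Rdag s = Rdag s ∧
        ((R s + (D s)ᵀ * P s * D s) * Rdag s)ᵀ = (R s + (D s)ᵀ * P s * D s) * Rdag s ∧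
        (Rdag s * (R s + (D s)ᵀ * P s * D s))ᵀ = Rdag s * (R s + (D s)ᵀ * P s * D s)) ∧
    -- the Riccati integral equation
    (∀ s ∈ Set.Icc t T,
      P s = G + ∫ r in s..T,
        (P r * A r + (A r)ᵀ * P r + (C r)ᵀ * P r * C r + Q r
          - ((B r)ᵀ * P r + (D r)ᵀ * P r * C r + S r)ᵀ * Rdag r
              * ((B r)ᵀ * P r + (D r)ᵀ * P r * C r + S r))) ∧
    -- the range condition R̂R̂†M = M a.e.
    (∀ᵐ s ∂volume.restrict (Set.Icc t T),
      (R s + (D s)ᵀ * P s * D s) * Rdag s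
          * ((B s)ᵀ * P s + (D s)ᵀ * P s * C s + S s)
        = (B s)ᵀ * P s + (D s)ᵀ * P s * C s + S s) ∧
    -- R̂†M ∈ L²(t,T;ℝ^{m×n})
    (AEStronglyMeasurable
        (fun s => Rdag s * ((B s)ᵀ * P s + (D s)ᵀ * P s * C s + S s))
        (volume.restrict (Set.Icc t T)) ∧
      IntegrableOn
        (fun s => ‖Rdag s * ((B s)ᵀ * P s + (D s)ᵀ * P s * C s + S s)‖ ^ 2)
        (Set.Icc t T)) ∧
    -- definiteness of the diagonal blocks, a.e.
    (∀ᵐ s ∂volume.restrict (Set.Icc t T),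
      ((R s + (D s)ᵀ * P s * D s).submatrix Sum.inl Sum.inl).PosSemidef ∧
        (-(R s + (D s)ᵀ * P s * D s).submatrix Sum.inr Sum.inr).PosSemidef)

open Set Filter

instance matContinuousENorm {m n : Type*} [Fintype m] [Fintype n] :
    ContinuousENorm (Matrix m n ℝ) :=
  SeminormedAddGroup.toContinuousENorm

instance matENormedAddMonoid {m n : Type*} [Fintype m] [Fintype n] :
    ENormedAddMonoid (Matrix m n ℝ) :=
  NormedAddGroup.toENormedAddMonoid

instance matPseudoMetrizable {m n : Type*} [Fintype m] [Fintype n] :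
    TopologicalSpace.PseudoMetrizableSpace (Matrix m n ℝ) :=
  inferInstanceAs (TopologicalSpace.PseudoMetrizableSpace (m → n → ℝ))

lemma mat_norm_mul {l m n : Type*} [Fintype l] [Fintype m] [Fintype n]
    (A : Matrix l m ℝ) (B : Matrix m n ℝ) :
    ‖A * B‖ ≤ (Fintype.card m : ℝ) * ‖A‖ * ‖B‖ := by
  rw [Matrix.norm_le_iff (by positivity)]
  intro i j
  calc ‖(A * B) i j‖ = ‖∑ k, A i k * B k j‖ := by rw [Matrix.mul_apply]
    _ ≤ ∑ k, ‖A i k * B k j‖ := norm_sum_le _ _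
    _ ≤ ∑ _k : m, ‖A‖ * ‖B‖ := by
        refine Finset.sum_le_sum fun k _ => ?_
        rw [norm_mul]
        exact mul_le_mul (A.norm_entry_le_entrywise_sup_norm)
          (B.norm_entry_le_entrywise_sup_norm) (norm_nonneg _) (norm_nonneg _)
    _ = (Fintype.card m : ℝ) * ‖A‖ * ‖B‖ := by
        rw [Finset.sum_const, Finset.card_univ, nsmul_eq_mul, mul_assoc]

lemma key_identity {m n : Type*} [Fintype m] [Fintype n]
    (Δ : Matrix n n ℝ) (B D : Matrix n m ℝ) (C : Matrix n n ℝ)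
    (M M' : Matrix m n ℝ) (Rh Rb X X' : Matrix m m ℝ)
    (hΔ : Δᵀ = Δ) (hRh : Rhᵀ = Rh) (hRb : Rbᵀ = Rb)
    (h1 : Rh = Rb + Dᵀ * Δ * D)
    (h2 : M = M' + (Bᵀ * Δ + Dᵀ * Δ * C))
    (h3 : Rh * (X * M) = M) (h4 : Rb * (X' * M') = M') :
    Mᵀ * X * M - M'ᵀ * X' * M' =
      Δ * B * (X' * M') + Cᵀ * Δ * D * (X' * M')
        - (X * M)ᵀ * Dᵀ * Δ * D * (X' * M')
        + (X * M)ᵀ * Bᵀ * Δ + (X * M)ᵀ * Dᵀ * Δ * C := by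
  obtain ⟨θ, hθ⟩ : ∃ θ, X * M = θ := ⟨_, rfl⟩
  obtain ⟨θ', hθ'⟩ : ∃ θ', X' * M' = θ' := ⟨_, rfl⟩
  rw [hθ] at h3
  rw [hθ'] at h4
  rw [hθ, hθ']
  -- step a : Mᵀ * X * M = θᵀ * M, M'ᵀ * X' * M' = θ'ᵀ * M'
  have ha : Mᵀ * X * M = θᵀ * M := by
    calc Mᵀ * X * M = Mᵀ * θ := by rw [Matrix.mul_assoc, hθ]
      _ = (Rh * θ)ᵀ * θ := by rw [h3]
      _ = θᵀ * (Rhᵀ * θ) := by rw [Matrix.transpose_mul, Matrix.mul_assoc]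
      _ = θᵀ * M := by rw [hRh, h3]
  have ha' : M'ᵀ * X' * M' = θ'ᵀ * M' := by
    calc M'ᵀ * X' * M' = M'ᵀ * θ' := by rw [Matrix.mul_assoc, hθ']
      _ = (Rb * θ')ᵀ * θ' := by rw [h4]
      _ = θ'ᵀ * (Rbᵀ * θ') := by rw [Matrix.transpose_mul, Matrix.mul_assoc]
      _ = θ'ᵀ * M' := by rw [hRb, h4]
  -- step b : Rb * θ - Rb * θ' = Bᵀ*Δ + Dᵀ*Δ*C - Dᵀ*Δ*D*θ
  have hb : Rb * θ - Rb * θ' = Bᵀ * Δ + Dᵀ * Δ * C - Dᵀ * Δ * D * θ := by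
    have h5 : Rb * θ = M - Dᵀ * Δ * D * θ := by
      have : (Rb + Dᵀ * Δ * D) * θ = M := by rw [← h1]; exact h3
      rw [Matrix.add_mul] at this
      rw [← this]; abel
    rw [h5, h4, h2]; abel
  rw [ha, ha']
  -- step c
  have hc : θᵀ * M - θ'ᵀ * M' = (θᵀ - θ'ᵀ) * M' + θᵀ * (Bᵀ * Δ + Dᵀ * Δ * C) := by
    rw [h2]
    simp only [Matrix.mul_add, Matrix.sub_mul]
    abel
  have hd : (θᵀ - θ'ᵀ) * M' = (Rb * θ - Rb * θ')ᵀ * θ' := by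
    calc (θᵀ - θ'ᵀ) * M' = (θᵀ - θ'ᵀ) * (Rb * θ') := by rw [h4]
      _ = ((θᵀ - θ'ᵀ) * Rb) * θ' := by rw [Matrix.mul_assoc]
      _ = (Rb * θ - Rb * θ')ᵀ * θ' := by
          congr 1
          rw [Matrix.transpose_sub, Matrix.transpose_mul, Matrix.transpose_mul, hRb,
            Matrix.sub_mul]
  rw [hc, hd, hb]
  simp only [Matrix.transpose_sub, Matrix.transpose_add, Matrix.transpose_mul,
    Matrix.transpose_transpose, hΔ]
  simp only [Matrix.sub_mul, Matrix.add_mul, Matrix.mul_add, Matrix.mul_sub, Matrix.mul_assoc]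
  abel

lemma gronwall_zero {t T : ℝ} (htT : t ≤ T) (u φ : ℝ → ℝ)
    (hu : ContinuousOn u (Icc t T))
    (hu0 : ∀ s ∈ Icc t T, 0 ≤ u s)
    (hφ : IntegrableOn φ (Icc t T))
    (hle : ∀ s ∈ Icc t T, u s ≤ ∫ r in Ioc s T, φ r * u r) :
    ∀ s ∈ Icc t T, u s = 0 := by
  -- global integrability of φ * u
  obtain ⟨U, hU⟩ := isCompact_Icc.exists_bound_of_continuousOn hu
  have hUnn : 0 ≤ U := le_trans (norm_nonneg _) (hU T (right_mem_Icc.2 htT))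
  have huaesm : AEStronglyMeasurable u (volume.restrict (Icc t T)) :=
    hu.aestronglyMeasurable measurableSet_Icc
  have hφu_int : IntegrableOn (fun r => φ r * u r) (Icc t T) := by
    refine Integrable.mono' (hφ.norm.const_mul U) (hφ.aestronglyMeasurable.mul huaesm) ?_
    filter_upwards [ae_restrict_mem measurableSet_Icc] with r hr
    rw [norm_mul]
    calc ‖φ r‖ * ‖u r‖ ≤ ‖φ r‖ * U := by
          exact mul_le_mul_of_nonneg_left (hU r hr) (norm_nonneg _)
      _ = U * ‖φ r‖ := mul_comm _ _
  -- the set of points to the right of which u vanishes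
  set Z : Set ℝ := {s | s ∈ Icc t T ∧ ∀ r ∈ Icc s T, u r = 0} with hZ
  have hTZ : T ∈ Z := by
    constructor
    · exact right_mem_Icc.2 htT
    · intro r hr
      have hrT : r = T := le_antisymm hr.2 hr.1
      subst hrT
      have := hle r (right_mem_Icc.2 htT)
      rw [Set.Ioc_self] at this
      simp only [Measure.restrict_empty, integral_zero_measure] at this
      exact le_antisymm this (hu0 r (right_mem_Icc.2 htT))
  have hZne : Z.Nonempty := ⟨T, hTZ⟩
  have hZbdd : BddBelow Z := ⟨t, fun z hz => hz.1.1⟩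
  set c := sInf Z with hc
  have hct : t ≤ c := le_csInf hZne fun z hz => hz.1.1
  have hcT : c ≤ T := csInf_le hZbdd hTZ
  have hcIcc : c ∈ Icc t T := ⟨hct, hcT⟩
  -- u vanishes strictly to the right of c
  have hright : ∀ r, c < r → r ≤ T → u r = 0 := by
    intro r hcr hrT
    obtain ⟨z, hzZ, hzr⟩ := (csInf_lt_iff hZbdd hZne).1 hcr
    exact hzZ.2 r ⟨hzr.le, hrT⟩
  -- u c = 0, hence c ∈ Z
  have hcZ : c ∈ Z := by
    refine ⟨hcIcc, fun r hr => ?_⟩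
    rcases eq_or_lt_of_le hr.1 with h | h
    · have h1 := hle c hcIcc
      have h2 : ∫ x in Ioc c T, φ x * u x = 0 := by
        rw [setIntegral_congr_fun measurableSet_Ioc
          (g := fun _ => (0 : ℝ)) (fun x hx => by rw [hright x hx.1 hx.2, mul_zero])]
        simp
      rw [h2] at h1
      rw [← h]
      exact le_antisymm h1 (hu0 c hcIcc)
    · exact hright r h hr.2
  -- show c = t
  rcases eq_or_lt_of_le hct with hct' | hct'
  · intro s hs
    exact hcZ.2 s ⟨hct' ▸ hs.1, hs.2⟩
  · exfalso
    -- find s' < c with small mass of |φ| on (s', c]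
    have hφabs : IntegrableOn (fun r => |φ r|) (Icc t c) :=
      (hφ.mono_set (Icc_subset_Icc le_rfl hcT)).abs
    have hcont : ContinuousOn (fun x => ∫ r in Ioc x c, |φ r|) (Icc t c) := by
      have h0 := intervalIntegral.continuousOn_primitive_interval_left (f := fun r => |φ r|)
        (a := t) (b := c) (μ := volume) (by rwa [uIcc_of_le hct])
      rw [uIcc_of_le hct] at h0
      refine ContinuousOn.congr h0 ?_
      intro x hx
      exact (intervalIntegral.integral_of_le hx.2).symm
    have hconc : ContinuousWithinAt (fun x => ∫ r in Ioc x c, |φ r|) (Icc t c) c :=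
      hcont c (right_mem_Icc.2 hct)
    have hzero : (fun x => ∫ r in Ioc x c, |φ r|) c = 0 := by
      simp [Set.Ioc_self]
    have htend : Tendsto (fun x => ∫ r in Ioc x c, |φ r|) (nhdsWithin c (Ico t c)) (nhds 0) := by
      rw [← hzero]
      exact hconc.tendsto.mono_left (nhdsWithin_mono c Ico_subset_Icc_self)
    have : ∀ᶠ x in nhdsWithin c (Ico t c), (∫ r in Ioc x c, |φ r|) < 1/2 :=
      htend.eventually (eventually_lt_nhds (by norm_num : (0:ℝ) < 1/2))
    have hne : (nhdsWithin c (Ico t c)).NeBot := right_nhdsWithin_Ico_neBot hct'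
    obtain ⟨s', hs'small, hs'mem⟩ := (this.and (eventually_mem_nhdsWithin)).exists
    obtain ⟨hs't, hs'c⟩ := hs'mem
    have hsub : Icc s' c ⊆ Icc t T := Icc_subset_Icc hs't hcT
    obtain ⟨x0, hx0mem, hx0max⟩ :=
      isCompact_Icc.exists_isMaxOn (nonempty_Icc.2 hs'c.le) (hu.mono hsub)
    have hx0nn : 0 ≤ u x0 := hu0 x0 (hsub hx0mem)
    have key : ∀ s ∈ Icc s' c, u s ≤ (1/2) * u x0 := by
      intro s hs
      have hsIcc : s ∈ Icc t T := hsub hs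
      have hsc : s ≤ c := hs.2
      have h1 := hle s hsIcc
      have hzero2 : ∫ x in Ioc c T, φ x * u x = 0 := by
        rw [setIntegral_congr_fun measurableSet_Ioc
          (g := fun _ => (0 : ℝ)) (fun x hx => by rw [hright x hx.1 hx.2, mul_zero])]
        simp
      have hsplit : ∫ x in Ioc s T, φ x * u x
          = (∫ x in Ioc s c, φ x * u x) + ∫ x in Ioc c T, φ x * u x := by
        rw [← Ioc_union_Ioc_eq_Ioc hsc hcT]
        exact setIntegral_union (Ioc_disjoint_Ioc_of_le le_rfl) measurableSet_Ioc
          (hφu_int.mono_set ((Ioc_subset_Icc_self).trans (Icc_subset_Icc hsIcc.1 hcT)))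
          (hφu_int.mono_set ((Ioc_subset_Icc_self).trans (Icc_subset_Icc hct le_rfl)))
      have h2 : ∫ x in Ioc s c, φ x * u x ≤ ∫ x in Ioc s c, |φ x| * u x0 := by
        refine integral_mono_ae
          (hφu_int.mono_set ((Ioc_subset_Icc_self).trans (Icc_subset_Icc hsIcc.1 hcT)))
          (((hφ.mono_set ((Ioc_subset_Icc_self).trans
            (Icc_subset_Icc hsIcc.1 hcT))).abs).mul_const _) ?_
        filter_upwards [ae_restrict_mem measurableSet_Ioc] with r hr
        have hrmem : r ∈ Icc s' c := ⟨hs.1.trans hr.1.le, hr.2⟩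
        have hrIcc : r ∈ Icc t T := hsub hrmem
        calc φ r * u r ≤ |φ r| * u r :=
              mul_le_mul_of_nonneg_right (le_abs_self _) (hu0 r hrIcc)
          _ ≤ |φ r| * u x0 := mul_le_mul_of_nonneg_left (hx0max hrmem) (abs_nonneg _)
      have h3 : ∫ x in Ioc s c, |φ x| * u x0 = (∫ x in Ioc s c, |φ x|) * u x0 := by
        rw [integral_mul_const]
      have h4 : ∫ x in Ioc s c, |φ x| ≤ ∫ x in Ioc s' c, |φ x| := by
        refine setIntegral_mono_set
          ((hφ.mono_set ((Ioc_subset_Icc_self).trans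
            (Icc_subset_Icc hs't hcT))).abs) ?_ ?_
        · exact Eventually.of_forall fun r => abs_nonneg _
        · exact HasSubset.Subset.eventuallyLE (Ioc_subset_Ioc_left hs.1)
      calc u s ≤ ∫ x in Ioc s T, φ x * u x := h1
        _ = (∫ x in Ioc s c, φ x * u x) + ∫ x in Ioc c T, φ x * u x := hsplit
        _ = ∫ x in Ioc s c, φ x * u x := by rw [hzero2, add_zero]
        _ ≤ (∫ x in Ioc s c, |φ x|) * u x0 := h2.trans (le_of_eq h3)
        _ ≤ (1/2) * u x0 := by
            refine mul_le_mul_of_nonneg_right ?_ hx0nn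
            exact (h4.trans hs'small.le)
    have hx0zero : u x0 = 0 := by
      have := key x0 hx0mem
      linarith
    have huzero : ∀ s ∈ Icc s' c, u s = 0 := fun s hs =>
      le_antisymm ((key s hs).trans (by rw [hx0zero]; norm_num)) (hu0 s (hsub hs))
    have hs'Z : s' ∈ Z := by
      refine ⟨⟨hs't, hs'c.le.trans hcT⟩, fun r hr => ?_⟩
      rcases le_or_gt r c with h | h
      · exact huzero r ⟨hr.1, h⟩
      · exact hright r h hr.2
    exact absurd (csInf_le hZbdd hs'Z) (not_le.2 hs'c)

lemma aesm_matmul {α : Type*} [MeasurableSpace α] {μ : Measure α}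
    {l m n : Type*} [Fintype l] [Fintype m] [Fintype n]
    {f : α → Matrix l m ℝ} {g : α → Matrix m n ℝ}
    (hf : AEStronglyMeasurable f μ) (hg : AEStronglyMeasurable g μ) :
    AEStronglyMeasurable (fun s => f s * g s) μ :=
  (Continuous.matrix_mul (continuous_fst) (continuous_snd)).comp_aestronglyMeasurable
    (hf.prodMk hg)

lemma aesm_mattrans {α : Type*} [MeasurableSpace α] {μ : Measure α}
    {m n : Type*} [Fintype m] [Fintype n]
    {f : α → Matrix m n ℝ} (hf : AEStronglyMeasurable f μ) :
    AEStronglyMeasurable (fun s => (f s)ᵀ) μ :=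
  (Continuous.matrix_transpose continuous_id).comp_aestronglyMeasurable hf

lemma integrable_mul_of_sq {α : Type*} [MeasurableSpace α] {μ : Measure α} {f g : α → ℝ}
    (hfm : AEStronglyMeasurable f μ) (hgm : AEStronglyMeasurable g μ)
    (hf : Integrable (fun s => f s ^ 2) μ) (hg : Integrable (fun s => g s ^ 2) μ) :
    Integrable (fun s => f s * g s) μ := by
  refine Integrable.mono' ((hf.add hg).div_const 2) (hfm.mul hgm) ?_
  refine Filter.Eventually.of_forall fun s => ?_
  rw [Real.norm_eq_abs, abs_mul]
  have h1 := sq_nonneg (|f s| - |g s|)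
  have h2 := sq_abs (f s)
  have h3 := sq_abs (g s)
  simp only [Pi.add_apply]
  nlinarith [abs_nonneg (f s), abs_nonneg (g s)]

lemma mat_norm_mul_le {l m n : Type*} [Fintype l] [Fintype m] [Fintype n]
    {A : Matrix l m ℝ} {B : Matrix m n ℝ} {c a b : ℝ}
    (hc : (Fintype.card m : ℝ) ≤ c) (ha : ‖A‖ ≤ a) (hb : ‖B‖ ≤ b) :
    ‖A * B‖ ≤ c * a * b := by
  have h0 : (0:ℝ) ≤ a := (norm_nonneg _).trans ha
  have h1 : (0:ℝ) ≤ b := (norm_nonneg _).trans hb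
  have h2 : (0:ℝ) ≤ c := (Nat.cast_nonneg _).trans hc
  calc ‖A * B‖ ≤ (Fintype.card m : ℝ) * ‖A‖ * ‖B‖ := mat_norm_mul A B
    _ ≤ c * a * b := by
        refine mul_le_mul (mul_le_mul hc ha (norm_nonneg _) h2) hb (norm_nonneg _) ?_
        exact mul_nonneg h2 h0

lemma sq_le_three_sq {x a b d : ℝ} (hx : 0 ≤ x) (h : x ≤ a + b + d)
    (ha : 0 ≤ a) (hb : 0 ≤ b) (hd : 0 ≤ d) :
    x ^ 2 ≤ 3 * a ^ 2 + 3 * b ^ 2 + 3 * d ^ 2 := by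
  nlinarith [sq_nonneg (a - b), sq_nonneg (a - d), sq_nonneg (b - d)]

lemma norm_transpose_le {m n : Type*} [Fintype m] [Fintype n]
    {A : Matrix m n ℝ} {a : ℝ} (ha : ‖A‖ ≤ a) : ‖Aᵀ‖ ≤ a := by
  rw [Matrix.norm_transpose]; exact ha

/-- Corollary 5.3: the game Riccati equation admits at most one regular solution. -/
theorem regular_game_riccati_solution_unique
    {n m₁ m₂ : ℕ} (hn : 1 ≤ n) (hm₁ : 1 ≤ m₁) (hm₂ : 1 ≤ m₂)
    (t T : ℝ) (ht : 0 ≤ t) (htT : t < T)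
    (A : ℝ → Matrix (Fin n) (Fin n) ℝ)
    (B : ℝ → Matrix (Fin n) (Fin m₁ ⊕ Fin m₂) ℝ)
    (C : ℝ → Matrix (Fin n) (Fin n) ℝ)
    (D : ℝ → Matrix (Fin n) (Fin m₁ ⊕ Fin m₂) ℝ)
    (Q : ℝ → Matrix (Fin n) (Fin n) ℝ)
    (S : ℝ → Matrix (Fin m₁ ⊕ Fin m₂) (Fin n) ℝ)
    (R : ℝ → Matrix (Fin m₁ ⊕ Fin m₂) (Fin m₁ ⊕ Fin m₂) ℝ)
    (G : Matrix (Fin n) (Fin n) ℝ)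
    -- A ∈ L¹(t,T;ℝ^{n×n})
    (hAmeas : AEStronglyMeasurable A (volume.restrict (Set.Icc t T)))
    (hA : IntegrableOn (fun s => ‖A s‖) (Set.Icc t T))
    -- B ∈ L²(t,T;ℝ^{n×m})
    (hBmeas : AEStronglyMeasurable B (volume.restrict (Set.Icc t T)))
    (hB : IntegrableOn (fun s => ‖B s‖ ^ 2) (Set.Icc t T))
    -- C ∈ L²(t,T;ℝ^{n×n})
    (hCmeas : AEStronglyMeasurable C (volume.restrict (Set.Icc t T)))
    (hC : IntegrableOn (fun s => ‖C s‖ ^ 2) (Set.Icc t T))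
    -- D ∈ L^∞(t,T;ℝ^{n×m})
    (hDmeas : AEStronglyMeasurable D (volume.restrict (Set.Icc t T)))
    (hD : ∃ K : ℝ, ∀ᵐ s ∂volume.restrict (Set.Icc t T), ‖D s‖ ≤ K)
    -- Q ∈ L¹(t,T;𝕊ⁿ)
    (hQmeas : AEStronglyMeasurable Q (volume.restrict (Set.Icc t T)))
    (hQ : IntegrableOn (fun s => ‖Q s‖) (Set.Icc t T))
    (hQsymm : ∀ᵐ s ∂volume.restrict (Set.Icc t T), (Q s)ᵀ = Q s)
    -- S ∈ L²(t,T;ℝ^{m×n})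
    (hSmeas : AEStronglyMeasurable S (volume.restrict (Set.Icc t T)))
    (hS : IntegrableOn (fun s => ‖S s‖ ^ 2) (Set.Icc t T))
    -- R ∈ L^∞(t,T;𝕊ᵐ)
    (hRmeas : AEStronglyMeasurable R (volume.restrict (Set.Icc t T)))
    (hR : ∃ K : ℝ, ∀ᵐ s ∂volume.restrict (Set.Icc t T), ‖R s‖ ≤ K)
    (hRsymm : ∀ᵐ s ∂volume.restrict (Set.Icc t T), (R s)ᵀ = R s)
    -- G ∈ 𝕊ⁿ
    (hG : Gᵀ = G)
    (P Pbar : ℝ → Matrix (Fin n) (Fin n) ℝ)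
    (hP : IsRegularGameRiccatiSolution t T A B C D Q S R G P)
    (hPbar : IsRegularGameRiccatiSolution t T A B C D Q S R G Pbar) :
    ∀ s ∈ Set.Icc t T, P s = Pbar s := by
  have htT' : t ≤ T := htT.le
  obtain ⟨hPc, hPsym, X, -, hEqP, hRanP, ⟨hΘm0, hΘ20⟩, -⟩ := hP
  obtain ⟨hP'c, hP'sym, X', -, hEqP', hRanP', ⟨hΘ'm0, hΘ'20⟩, -⟩ := hPbar
  -- opaque abbreviations
  obtain ⟨MP, hMPdef⟩ : ∃ f : ℝ → Matrix (Fin m₁ ⊕ Fin m₂) (Fin n) ℝ,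
      ∀ s, f s = (B s)ᵀ * P s + (D s)ᵀ * P s * C s + S s := ⟨_, fun _ => rfl⟩
  obtain ⟨MP', hMP'def⟩ : ∃ f : ℝ → Matrix (Fin m₁ ⊕ Fin m₂) (Fin n) ℝ,
      ∀ s, f s = (B s)ᵀ * Pbar s + (D s)ᵀ * Pbar s * C s + S s := ⟨_, fun _ => rfl⟩
  obtain ⟨Θ, hΘdef⟩ : ∃ f : ℝ → Matrix (Fin m₁ ⊕ Fin m₂) (Fin n) ℝ,
      ∀ s, f s = X s * MP s := ⟨_, fun _ => rfl⟩
  obtain ⟨Θ', hΘ'def⟩ : ∃ f : ℝ → Matrix (Fin m₁ ⊕ Fin m₂) (Fin n) ℝ,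
      ∀ s, f s = X' s * MP' s := ⟨_, fun _ => rfl⟩
  obtain ⟨fP, hfPdef⟩ : ∃ f : ℝ → Matrix (Fin n) (Fin n) ℝ,
      ∀ s, f s = P s * A s + (A s)ᵀ * P s + (C s)ᵀ * P s * C s + Q s
        - (MP s)ᵀ * Θ s := ⟨_, fun _ => rfl⟩
  obtain ⟨fP', hfP'def⟩ : ∃ f : ℝ → Matrix (Fin n) (Fin n) ℝ,
      ∀ s, f s = Pbar s * A s + (A s)ᵀ * Pbar s + (C s)ᵀ * Pbar s * C s + Q s
        - (MP' s)ᵀ * Θ' s := ⟨_, fun _ => rfl⟩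
  -- constants
  obtain ⟨c, hcn, hcm⟩ : ∃ c : ℝ, (Fintype.card (Fin n) : ℝ) ≤ c ∧
      (Fintype.card (Fin m₁ ⊕ Fin m₂) : ℝ) ≤ c :=
    ⟨max _ _, le_max_left _ _, le_max_right _ _⟩
  have hc0 : (0:ℝ) ≤ c := (Nat.cast_nonneg _).trans hcn
  obtain ⟨KP, hKP⟩ := isCompact_Icc.exists_bound_of_continuousOn hPc
  obtain ⟨KP', hKP'⟩ := isCompact_Icc.exists_bound_of_continuousOn hP'c
  have hTmem : T ∈ Set.Icc t T := Set.right_mem_Icc.2 htT'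
  have hKP0 : 0 ≤ KP := (norm_nonneg _).trans (hKP T hTmem)
  have hKP'0 : 0 ≤ KP' := (norm_nonneg _).trans (hKP' T hTmem)
  obtain ⟨KD0, hKD0⟩ := hD
  obtain ⟨K, hK0, hKD⟩ : ∃ K : ℝ, 0 ≤ K ∧
      ∀ᵐ s ∂volume.restrict (Set.Icc t T), ‖D s‖ ≤ K :=
    ⟨|KD0|, abs_nonneg _, hKD0.mono fun s h => h.trans (le_abs_self _)⟩
  -- measurability
  have hPm : AEStronglyMeasurable P (volume.restrict (Set.Icc t T)) :=
    hPc.aestronglyMeasurable measurableSet_Icc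
  have hP'm : AEStronglyMeasurable Pbar (volume.restrict (Set.Icc t T)) :=
    hP'c.aestronglyMeasurable measurableSet_Icc
  have hMPm : AEStronglyMeasurable MP (volume.restrict (Set.Icc t T)) := by
    refine AEStronglyMeasurable.congr ?_ (Filter.Eventually.of_forall fun s => (hMPdef s).symm)
    exact ((aesm_matmul (aesm_mattrans hBmeas) hPm).add
      (aesm_matmul (aesm_matmul (aesm_mattrans hDmeas) hPm) hCmeas)).add hSmeas
  have hMP'm : AEStronglyMeasurable MP' (volume.restrict (Set.Icc t T)) := by
    refine AEStronglyMeasurable.congr ?_ (Filter.Eventually.of_forall fun s => (hMP'def s).symm)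
    exact ((aesm_matmul (aesm_mattrans hBmeas) hP'm).add
      (aesm_matmul (aesm_matmul (aesm_mattrans hDmeas) hP'm) hCmeas)).add hSmeas
  have hΘm : AEStronglyMeasurable Θ (volume.restrict (Set.Icc t T)) := by
    refine AEStronglyMeasurable.congr hΘm0 (Filter.Eventually.of_forall fun s => ?_)
    rw [hΘdef, hMPdef]
  have hΘ'm : AEStronglyMeasurable Θ' (volume.restrict (Set.Icc t T)) := by
    refine AEStronglyMeasurable.congr hΘ'm0 (Filter.Eventually.of_forall fun s => ?_)
    rw [hΘ'def, hMP'def]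
  have hΘ2 : IntegrableOn (fun s => ‖Θ s‖ ^ 2) (Set.Icc t T) := by
    refine hΘ20.congr (Filter.Eventually.of_forall fun s => ?_)
    simp only [hΘdef, hMPdef]
  have hΘ'2 : IntegrableOn (fun s => ‖Θ' s‖ ^ 2) (Set.Icc t T) := by
    refine hΘ'20.congr (Filter.Eventually.of_forall fun s => ?_)
    simp only [hΘ'def, hMP'def]
  -- restated integral equations
  have hEqP2 : ∀ s ∈ Set.Icc t T, P s = G + ∫ r in s..T, fP r := by
    intro s hs
    rw [hEqP s hs]
    congr 1
    refine intervalIntegral.integral_congr fun r _ => ?_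
    rw [hfPdef, hΘdef, hMPdef, ← Matrix.mul_assoc]
  have hEqP'2 : ∀ s ∈ Set.Icc t T, Pbar s = G + ∫ r in s..T, fP' r := by
    intro s hs
    rw [hEqP' s hs]
    congr 1
    refine intervalIntegral.integral_congr fun r _ => ?_
    rw [hfP'def, hΘ'def, hMP'def, ← Matrix.mul_assoc]
  -- integrability of the Riccati integrands
  have hMP2 : IntegrableOn (fun s => ‖MP s‖ ^ 2) (Set.Icc t T) := by
    have hMPn2m : AEStronglyMeasurable (fun s => ‖MP s‖ ^ 2) (volume.restrict (Set.Icc t T)) := by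
      exact hMPm.norm.pow 2
    refine Integrable.mono'
      (((hB.const_mul (3 * (c * KP) ^ 2)).add
        (hC.const_mul (3 * (c ^ 2 * K * KP) ^ 2))).add (hS.const_mul 3)) hMPn2m ?_
    filter_upwards [hKD, ae_restrict_mem measurableSet_Icc] with s hDs hsI
    have hb1 : ‖(B s)ᵀ * P s‖ ≤ c * ‖B s‖ * KP :=
      mat_norm_mul_le hcn (norm_transpose_le le_rfl) (hKP s hsI)
    have hb2 : ‖(D s)ᵀ * P s * C s‖ ≤ c * (c * K * KP) * ‖C s‖ :=
      mat_norm_mul_le hcn (mat_norm_mul_le hcn (norm_transpose_le hDs) (hKP s hsI)) le_rfl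
    have hMPb : ‖MP s‖ ≤ c * KP * ‖B s‖ + c ^ 2 * K * KP * ‖C s‖ + ‖S s‖ := by
      rw [hMPdef s]
      calc ‖(B s)ᵀ * P s + (D s)ᵀ * P s * C s + S s‖
          ≤ ‖(B s)ᵀ * P s + (D s)ᵀ * P s * C s‖ + ‖S s‖ := norm_add_le _ _
        _ ≤ ‖(B s)ᵀ * P s‖ + ‖(D s)ᵀ * P s * C s‖ + ‖S s‖ := by
            have := norm_add_le ((B s)ᵀ * P s) ((D s)ᵀ * P s * C s)
            linarith
        _ ≤ c * KP * ‖B s‖ + c ^ 2 * K * KP * ‖C s‖ + ‖S s‖ := by nlinarith [hb1, hb2]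
    have h0 : 0 ≤ c * KP * ‖B s‖ := by positivity
    have h1 : 0 ≤ c ^ 2 * K * KP * ‖C s‖ := by positivity
    have h2 : (0:ℝ) ≤ ‖S s‖ := norm_nonneg _
    rw [Real.norm_eq_abs, abs_of_nonneg (sq_nonneg _)]
    refine le_trans (sq_le_three_sq (norm_nonneg _) hMPb h0 h1 h2) (le_of_eq ?_)
    simp only [Pi.add_apply]
    ring
  have hMP'2 : IntegrableOn (fun s => ‖MP' s‖ ^ 2) (Set.Icc t T) := by
    have hMPn2m : AEStronglyMeasurable (fun s => ‖MP' s‖ ^ 2) (volume.restrict (Set.Icc t T)) := by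
      exact hMP'm.norm.pow 2
    refine Integrable.mono'
      (((hB.const_mul (3 * (c * KP') ^ 2)).add
        (hC.const_mul (3 * (c ^ 2 * K * KP') ^ 2))).add (hS.const_mul 3)) hMPn2m ?_
    filter_upwards [hKD, ae_restrict_mem measurableSet_Icc] with s hDs hsI
    have hb1 : ‖(B s)ᵀ * Pbar s‖ ≤ c * ‖B s‖ * KP' :=
      mat_norm_mul_le hcn (norm_transpose_le le_rfl) (hKP' s hsI)
    have hb2 : ‖(D s)ᵀ * Pbar s * C s‖ ≤ c * (c * K * KP') * ‖C s‖ :=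
      mat_norm_mul_le hcn (mat_norm_mul_le hcn (norm_transpose_le hDs) (hKP' s hsI)) le_rfl
    have hMPb : ‖MP' s‖ ≤ c * KP' * ‖B s‖ + c ^ 2 * K * KP' * ‖C s‖ + ‖S s‖ := by
      rw [hMP'def s]
      calc ‖(B s)ᵀ * Pbar s + (D s)ᵀ * Pbar s * C s + S s‖
          ≤ ‖(B s)ᵀ * Pbar s + (D s)ᵀ * Pbar s * C s‖ + ‖S s‖ := norm_add_le _ _
        _ ≤ ‖(B s)ᵀ * Pbar s‖ + ‖(D s)ᵀ * Pbar s * C s‖ + ‖S s‖ := by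
            have := norm_add_le ((B s)ᵀ * Pbar s) ((D s)ᵀ * Pbar s * C s)
            linarith
        _ ≤ c * KP' * ‖B s‖ + c ^ 2 * K * KP' * ‖C s‖ + ‖S s‖ := by nlinarith [hb1, hb2]
    have h0 : 0 ≤ c * KP' * ‖B s‖ := by positivity
    have h1 : 0 ≤ c ^ 2 * K * KP' * ‖C s‖ := by positivity
    have h2 : (0:ℝ) ≤ ‖S s‖ := norm_nonneg _
    rw [Real.norm_eq_abs, abs_of_nonneg (sq_nonneg _)]
    refine le_trans (sq_le_three_sq (norm_nonneg _) hMPb h0 h1 h2) (le_of_eq ?_)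
    simp only [Pi.add_apply]
    ring
  have hfP_int : IntegrableOn fP (Set.Icc t T) := by
    have iPA : Integrable (fun s => P s * A s) (volume.restrict (Set.Icc t T)) := by
      refine Integrable.mono' (hA.const_mul (c * KP)) (aesm_matmul hPm hAmeas) ?_
      filter_upwards [ae_restrict_mem measurableSet_Icc] with s hsI
      exact mat_norm_mul_le hcn (hKP s hsI) le_rfl
    have iAP : Integrable (fun s => (A s)ᵀ * P s) (volume.restrict (Set.Icc t T)) := by
      refine Integrable.mono' (hA.const_mul (c * KP)) (aesm_matmul (aesm_mattrans hAmeas) hPm) ?_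
      filter_upwards [ae_restrict_mem measurableSet_Icc] with s hsI
      calc ‖(A s)ᵀ * P s‖ ≤ c * ‖A s‖ * KP :=
            mat_norm_mul_le hcn (norm_transpose_le le_rfl) (hKP s hsI)
        _ = c * KP * ‖A s‖ := by ring
    have iCPC : Integrable (fun s => (C s)ᵀ * P s * C s) (volume.restrict (Set.Icc t T)) := by
      refine Integrable.mono' (hC.const_mul (c ^ 2 * KP))
        (aesm_matmul (aesm_matmul (aesm_mattrans hCmeas) hPm) hCmeas) ?_
      filter_upwards [ae_restrict_mem measurableSet_Icc] with s hsI
      calc ‖(C s)ᵀ * P s * C s‖ ≤ c * (c * ‖C s‖ * KP) * ‖C s‖ :=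
            mat_norm_mul_le hcn
              (mat_norm_mul_le hcn (norm_transpose_le le_rfl) (hKP s hsI)) le_rfl
        _ = c ^ 2 * KP * ‖C s‖ ^ 2 := by ring
    have iQ : Integrable Q (volume.restrict (Set.Icc t T)) :=
      Integrable.mono' hQ hQmeas (Filter.Eventually.of_forall fun s => le_rfl)
    have iMXM : Integrable (fun s => (MP s)ᵀ * Θ s) (volume.restrict (Set.Icc t T)) := by
      refine Integrable.mono'
        ((integrable_mul_of_sq hMPm.norm hΘm.norm hMP2 hΘ2).const_mul c)
        (aesm_matmul (aesm_mattrans hMPm) hΘm) ?_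
      refine Filter.Eventually.of_forall fun s => ?_
      calc ‖(MP s)ᵀ * Θ s‖ ≤ c * ‖MP s‖ * ‖Θ s‖ :=
            mat_norm_mul_le hcm (norm_transpose_le le_rfl) le_rfl
        _ = c * (‖MP s‖ * ‖Θ s‖) := by ring
    exact ((((iPA.add iAP).add iCPC).add iQ).sub iMXM).congr
      (Filter.Eventually.of_forall fun s => (hfPdef s).symm)
  have hfP'_int : IntegrableOn fP' (Set.Icc t T) := by
    have iPA : Integrable (fun s => Pbar s * A s) (volume.restrict (Set.Icc t T)) := by
      refine Integrable.mono' (hA.const_mul (c * KP')) (aesm_matmul hP'm hAmeas) ?_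
      filter_upwards [ae_restrict_mem measurableSet_Icc] with s hsI
      exact mat_norm_mul_le hcn (hKP' s hsI) le_rfl
    have iAP : Integrable (fun s => (A s)ᵀ * Pbar s) (volume.restrict (Set.Icc t T)) := by
      refine Integrable.mono' (hA.const_mul (c * KP')) (aesm_matmul (aesm_mattrans hAmeas) hP'm) ?_
      filter_upwards [ae_restrict_mem measurableSet_Icc] with s hsI
      calc ‖(A s)ᵀ * Pbar s‖ ≤ c * ‖A s‖ * KP' :=
            mat_norm_mul_le hcn (norm_transpose_le le_rfl) (hKP' s hsI)
        _ = c * KP' * ‖A s‖ := by ring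
    have iCPC : Integrable (fun s => (C s)ᵀ * Pbar s * C s) (volume.restrict (Set.Icc t T)) := by
      refine Integrable.mono' (hC.const_mul (c ^ 2 * KP'))
        (aesm_matmul (aesm_matmul (aesm_mattrans hCmeas) hP'm) hCmeas) ?_
      filter_upwards [ae_restrict_mem measurableSet_Icc] with s hsI
      calc ‖(C s)ᵀ * Pbar s * C s‖ ≤ c * (c * ‖C s‖ * KP') * ‖C s‖ :=
            mat_norm_mul_le hcn
              (mat_norm_mul_le hcn (norm_transpose_le le_rfl) (hKP' s hsI)) le_rfl
        _ = c ^ 2 * KP' * ‖C s‖ ^ 2 := by ring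
    have iQ : Integrable Q (volume.restrict (Set.Icc t T)) :=
      Integrable.mono' hQ hQmeas (Filter.Eventually.of_forall fun s => le_rfl)
    have iMXM : Integrable (fun s => (MP' s)ᵀ * Θ' s) (volume.restrict (Set.Icc t T)) := by
      refine Integrable.mono'
        ((integrable_mul_of_sq hMP'm.norm hΘ'm.norm hMP'2 hΘ'2).const_mul c)
        (aesm_matmul (aesm_mattrans hMP'm) hΘ'm) ?_
      refine Filter.Eventually.of_forall fun s => ?_
      calc ‖(MP' s)ᵀ * Θ' s‖ ≤ c * ‖MP' s‖ * ‖Θ' s‖ :=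
            mat_norm_mul_le hcm (norm_transpose_le le_rfl) le_rfl
        _ = c * (‖MP' s‖ * ‖Θ' s‖) := by ring
    exact ((((iPA.add iAP).add iCPC).add iQ).sub iMXM).congr
      (Filter.Eventually.of_forall fun s => (hfP'def s).symm)
  -- difference of solutions as an integral
  have hΔeq : ∀ s ∈ Set.Icc t T, P s - Pbar s = ∫ r in s..T, (fP r - fP' r) := by
    intro s hs
    have h1 : IntervalIntegrable fP volume s T :=
      (intervalIntegrable_iff_integrableOn_Ioc_of_le hs.2).2
        (hfP_int.mono_set ((Set.Ioc_subset_Icc_self).trans (Set.Icc_subset_Icc hs.1 le_rfl)))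
    have h2 : IntervalIntegrable fP' volume s T :=
      (intervalIntegrable_iff_integrableOn_Ioc_of_le hs.2).2
        (hfP'_int.mono_set ((Set.Ioc_subset_Icc_self).trans (Set.Icc_subset_Icc hs.1 le_rfl)))
    rw [hEqP2 s hs, hEqP'2 s hs, intervalIntegral.integral_sub h1 h2]
    abel
  -- the key algebraic identity, a.e.
  obtain ⟨L, hLdef⟩ : ∃ f : ℝ → Matrix (Fin n) (Fin n) ℝ,
      ∀ s, f s = (P s - Pbar s) * A s + (A s)ᵀ * (P s - Pbar s)
          + (C s)ᵀ * (P s - Pbar s) * C s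
          - ((P s - Pbar s) * B s * Θ' s + (C s)ᵀ * (P s - Pbar s) * D s * Θ' s
            - (Θ s)ᵀ * (D s)ᵀ * (P s - Pbar s) * D s * Θ' s
            + (Θ s)ᵀ * (B s)ᵀ * (P s - Pbar s)
            + (Θ s)ᵀ * (D s)ᵀ * (P s - Pbar s) * C s) := ⟨_, fun _ => rfl⟩
  have hkey : ∀ᵐ s ∂volume.restrict (Set.Icc t T), fP s - fP' s = L s := by
    filter_upwards [hRanP, hRanP', hRsymm, ae_restrict_mem measurableSet_Icc]
      with s hr hr' hRs hsI
    have hPs := hPsym s hsI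
    have hP's := hP'sym s hsI
    have hΔsym : (P s - Pbar s)ᵀ = P s - Pbar s := by
      rw [Matrix.transpose_sub, hPs, hP's]
    have hRhsym : (R s + (D s)ᵀ * P s * D s)ᵀ = R s + (D s)ᵀ * P s * D s := by
      simp only [Matrix.transpose_add, Matrix.transpose_mul, Matrix.transpose_transpose,
        hRs, hPs, Matrix.mul_assoc]
    have hRbsym : (R s + (D s)ᵀ * Pbar s * D s)ᵀ = R s + (D s)ᵀ * Pbar s * D s := by
      simp only [Matrix.transpose_add, Matrix.transpose_mul, Matrix.transpose_transpose,
        hRs, hP's, Matrix.mul_assoc]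
    have h1 : R s + (D s)ᵀ * P s * D s
        = R s + (D s)ᵀ * Pbar s * D s + (D s)ᵀ * (P s - Pbar s) * D s := by
      simp only [Matrix.mul_sub, Matrix.sub_mul]
      abel
    have h2 : MP s = MP' s + ((B s)ᵀ * (P s - Pbar s) + (D s)ᵀ * (P s - Pbar s) * C s) := by
      rw [hMPdef, hMP'def]
      simp only [Matrix.mul_sub, Matrix.sub_mul]
      abel
    have h3 : (R s + (D s)ᵀ * P s * D s) * (X s * MP s) = MP s := by
      rw [hMPdef, ← Matrix.mul_assoc]
      exact hr
    have h4 : (R s + (D s)ᵀ * Pbar s * D s) * (X' s * MP' s) = MP' s := by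
      rw [hMP'def, ← Matrix.mul_assoc]
      exact hr'
    have hkeyid := key_identity (P s - Pbar s) (B s) (D s) (C s) (MP s) (MP' s)
      (R s + (D s)ᵀ * P s * D s) (R s + (D s)ᵀ * Pbar s * D s) (X s) (X' s)
      hΔsym hRhsym hRbsym h1 h2 h3 h4
    have hexp : fP s - fP' s
        = ((P s - Pbar s) * A s + (A s)ᵀ * (P s - Pbar s)
            + (C s)ᵀ * (P s - Pbar s) * C s)
          - ((MP s)ᵀ * X s * MP s - (MP' s)ᵀ * X' s * MP' s) := by
      rw [hfPdef, hfP'def, hΘdef, hΘ'def, ← Matrix.mul_assoc, ← Matrix.mul_assoc]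
      simp only [Matrix.mul_sub, Matrix.sub_mul]
      abel
    rw [hexp, hkeyid, hLdef, hΘdef, hΘ'def]
  -- the a.e. norm bound
  obtain ⟨φ, hφdef⟩ : ∃ f : ℝ → ℝ, ∀ s, f s =
      c * ‖A s‖ + c * ‖A s‖ + c ^ 2 * ‖C s‖ ^ 2
        + c ^ 2 * (‖B s‖ * ‖Θ' s‖) + c ^ 3 * K * (‖C s‖ * ‖Θ' s‖)
        + c ^ 4 * K ^ 2 * (‖Θ s‖ * ‖Θ' s‖) + c ^ 2 * (‖Θ s‖ * ‖B s‖)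
        + c ^ 3 * K * (‖Θ s‖ * ‖C s‖) := ⟨_, fun _ => rfl⟩
  have hbound : ∀ᵐ s ∂volume.restrict (Set.Icc t T),
      ‖fP s - fP' s‖ ≤ φ s * ‖P s - Pbar s‖ := by
    filter_upwards [hkey, hKD] with s hks hDs
    rw [hks, hLdef]
    have h1t : ‖(P s - Pbar s) * A s‖ ≤ c * ‖A s‖ * ‖P s - Pbar s‖ :=
      le_trans (mat_norm_mul_le hcn le_rfl le_rfl) (le_of_eq (by ring))
    have h2t : ‖(A s)ᵀ * (P s - Pbar s)‖ ≤ c * ‖A s‖ * ‖P s - Pbar s‖ :=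
      mat_norm_mul_le hcn (norm_transpose_le le_rfl) le_rfl
    have h3t : ‖(C s)ᵀ * (P s - Pbar s) * C s‖ ≤ c ^ 2 * ‖C s‖ ^ 2 * ‖P s - Pbar s‖ :=
      le_trans (mat_norm_mul_le hcn
        (mat_norm_mul_le hcn (norm_transpose_le le_rfl) le_rfl) le_rfl)
        (le_of_eq (by ring))
    have h4t : ‖(P s - Pbar s) * B s * Θ' s‖
        ≤ c ^ 2 * (‖B s‖ * ‖Θ' s‖) * ‖P s - Pbar s‖ :=
      le_trans (mat_norm_mul_le hcm (mat_norm_mul_le hcn le_rfl le_rfl) le_rfl)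
        (le_of_eq (by ring))
    have h5t : ‖(C s)ᵀ * (P s - Pbar s) * D s * Θ' s‖
        ≤ c ^ 3 * K * (‖C s‖ * ‖Θ' s‖) * ‖P s - Pbar s‖ :=
      le_trans (mat_norm_mul_le hcm (mat_norm_mul_le hcn
        (mat_norm_mul_le hcn (norm_transpose_le le_rfl) le_rfl) hDs) le_rfl)
        (le_of_eq (by ring))
    have h6t : ‖(Θ s)ᵀ * (D s)ᵀ * (P s - Pbar s) * D s * Θ' s‖
        ≤ c ^ 4 * K ^ 2 * (‖Θ s‖ * ‖Θ' s‖) * ‖P s - Pbar s‖ :=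
      le_trans (mat_norm_mul_le hcm (mat_norm_mul_le hcn (mat_norm_mul_le hcn
        (mat_norm_mul_le hcm (norm_transpose_le le_rfl) (norm_transpose_le hDs))
        le_rfl) hDs) le_rfl) (le_of_eq (by ring))
    have h7t : ‖(Θ s)ᵀ * (B s)ᵀ * (P s - Pbar s)‖
        ≤ c ^ 2 * (‖Θ s‖ * ‖B s‖) * ‖P s - Pbar s‖ :=
      le_trans (mat_norm_mul_le hcn
        (mat_norm_mul_le hcm (norm_transpose_le le_rfl) (norm_transpose_le le_rfl)) le_rfl)
        (le_of_eq (by ring))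
    have h8t : ‖(Θ s)ᵀ * (D s)ᵀ * (P s - Pbar s) * C s‖
        ≤ c ^ 3 * K * (‖Θ s‖ * ‖C s‖) * ‖P s - Pbar s‖ :=
      le_trans (mat_norm_mul_le hcn (mat_norm_mul_le hcn
        (mat_norm_mul_le hcm (norm_transpose_le le_rfl) (norm_transpose_le hDs))
        le_rfl) le_rfl) (le_of_eq (by ring))
    have tri1 : ‖(P s - Pbar s) * A s + (A s)ᵀ * (P s - Pbar s)
          + (C s)ᵀ * (P s - Pbar s) * C s‖
        ≤ ‖(P s - Pbar s) * A s‖ + ‖(A s)ᵀ * (P s - Pbar s)‖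
          + ‖(C s)ᵀ * (P s - Pbar s) * C s‖ := norm_add₃_le
    have tri2 : ‖(P s - Pbar s) * B s * Θ' s + (C s)ᵀ * (P s - Pbar s) * D s * Θ' s
          - (Θ s)ᵀ * (D s)ᵀ * (P s - Pbar s) * D s * Θ' s
          + (Θ s)ᵀ * (B s)ᵀ * (P s - Pbar s)
          + (Θ s)ᵀ * (D s)ᵀ * (P s - Pbar s) * C s‖
        ≤ (‖(P s - Pbar s) * B s * Θ' s‖ + ‖(C s)ᵀ * (P s - Pbar s) * D s * Θ' s‖
          + ‖(Θ s)ᵀ * (D s)ᵀ * (P s - Pbar s) * D s * Θ' s‖)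
          + ‖(Θ s)ᵀ * (B s)ᵀ * (P s - Pbar s)‖
          + ‖(Θ s)ᵀ * (D s)ᵀ * (P s - Pbar s) * C s‖ := by
      refine le_trans norm_add₃_le ?_
      have := norm_sub_le ((P s - Pbar s) * B s * Θ' s
        + (C s)ᵀ * (P s - Pbar s) * D s * Θ' s)
        ((Θ s)ᵀ * (D s)ᵀ * (P s - Pbar s) * D s * Θ' s)
      have h2 := norm_add_le ((P s - Pbar s) * B s * Θ' s)
        ((C s)ᵀ * (P s - Pbar s) * D s * Θ' s)
      linarith
    have htot := le_trans (norm_sub_le _ _) (add_le_add tri1 tri2)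
    have hφz : φ s * ‖P s - Pbar s‖
        = c * ‖A s‖ * ‖P s - Pbar s‖ + c * ‖A s‖ * ‖P s - Pbar s‖
          + c ^ 2 * ‖C s‖ ^ 2 * ‖P s - Pbar s‖
          + c ^ 2 * (‖B s‖ * ‖Θ' s‖) * ‖P s - Pbar s‖
          + c ^ 3 * K * (‖C s‖ * ‖Θ' s‖) * ‖P s - Pbar s‖
          + c ^ 4 * K ^ 2 * (‖Θ s‖ * ‖Θ' s‖) * ‖P s - Pbar s‖
          + c ^ 2 * (‖Θ s‖ * ‖B s‖) * ‖P s - Pbar s‖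
          + c ^ 3 * K * (‖Θ s‖ * ‖C s‖) * ‖P s - Pbar s‖ := by
      rw [hφdef]; ring
    rw [hφz]
    linarith
  have hφ_int : IntegrableOn φ (Set.Icc t T) := by
    have hBn := hBmeas.norm
    have hCn := hCmeas.norm
    have hΘn := hΘm.norm
    have hΘ'n := hΘ'm.norm
    refine Integrable.congr ?_ (Filter.Eventually.of_forall fun s => (hφdef s).symm)
    exact (((((((hA.const_mul c).add (hA.const_mul c)).add (hC.const_mul (c ^ 2))).add
      ((integrable_mul_of_sq hBn hΘ'n hB hΘ'2).const_mul (c ^ 2))).add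
      ((integrable_mul_of_sq hCn hΘ'n hC hΘ'2).const_mul (c ^ 3 * K))).add
      ((integrable_mul_of_sq hΘn hΘ'n hΘ2 hΘ'2).const_mul (c ^ 4 * K ^ 2))).add
      ((integrable_mul_of_sq hΘn hBn hΘ2 hB).const_mul (c ^ 2))).add
      ((integrable_mul_of_sq hΘn hCn hΘ2 hC).const_mul (c ^ 3 * K))
  -- Gronwall setup
  have hucont : ContinuousOn (fun s => ‖P s - Pbar s‖) (Set.Icc t T) := (hPc.sub hP'c).norm
  have hunn : ∀ s ∈ Set.Icc t T, 0 ≤ ‖P s - Pbar s‖ := fun s _ => norm_nonneg _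
  have hule : ∀ s ∈ Set.Icc t T,
      ‖P s - Pbar s‖ ≤ ∫ r in Set.Ioc s T, φ r * ‖P r - Pbar r‖ := by
    have hφu_int : IntegrableOn (fun r => φ r * ‖P r - Pbar r‖) (Set.Icc t T) := by
      refine Integrable.mono' (hφ_int.norm.const_mul (KP + KP'))
        (hφ_int.aestronglyMeasurable.mul
          (hucont.aestronglyMeasurable measurableSet_Icc)) ?_
      filter_upwards [ae_restrict_mem measurableSet_Icc] with r hrI
      rw [Real.norm_eq_abs, abs_mul, abs_norm]
      have hub : ‖P r - Pbar r‖ ≤ KP + KP' :=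
        (norm_sub_le _ _).trans (add_le_add (hKP r hrI) (hKP' r hrI))
      calc |φ r| * ‖P r - Pbar r‖ ≤ |φ r| * (KP + KP') :=
            mul_le_mul_of_nonneg_left hub (abs_nonneg _)
        _ = (KP + KP') * ‖φ r‖ := by rw [Real.norm_eq_abs]; ring
    intro s hs
    have hsub : Set.Ioc s T ⊆ Set.Icc t T :=
      (Set.Ioc_subset_Icc_self).trans (Set.Icc_subset_Icc hs.1 le_rfl)
    rw [hΔeq s hs]
    calc ‖∫ r in s..T, (fP r - fP' r)‖ ≤ ∫ r in s..T, ‖fP r - fP' r‖ :=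
          intervalIntegral.norm_integral_le_integral_norm hs.2
      _ = ∫ r in Set.Ioc s T, ‖fP r - fP' r‖ := intervalIntegral.integral_of_le hs.2
      _ ≤ ∫ r in Set.Ioc s T, φ r * ‖P r - Pbar r‖ := by
          refine integral_mono_ae
            (IntegrableOn.mono_set ((hfP_int.sub hfP'_int).norm) hsub)
            (IntegrableOn.mono_set hφu_int hsub) ?_
          exact ae_restrict_of_ae_restrict_of_subset hsub hbound
  have hfinal := gronwall_zero htT' (fun s => ‖P s - Pbar s‖) φ hucont hunn hφ_int hule
  intro s hs
  have := hfinal s hs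
  rwa [norm_eq_zero, sub_eq_zero] at this
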